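/- Let ω be a weight function with ω(2t) = O(ω(t)) as t → ∞ (condition (ω₁)), and let (x_n) be a strictly increasing sequence with x_n > 2 x_{n-1} + n and ω(x_n) ≥ 2^{n-i} ω(x_i) for i < n. Define ω̃(t) := n ω(t) − Σ_{i=1}^n ω(x_i) on [x_n, x_{n+1}). Then ω̃ also satisfies (ω₁): ω̃(2t) = O(ω̃(t)) as t → ∞. -/

import Mathlib

open Filter Asymptotics

set_option maxHeartbeats 1000000

/-- If the weight function `ω` satisfies `(ω₁)` (`ω(2t) = O(ω(t))`) and `ω̃` is constructed
from `ω` as in the reduction lemma (with `x_n > 2 x_{n-1} + n`), then `ω̃` also satisfies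
`(ω₁)`: `ω̃(2t) = O(ω̃(t))` as `t → ∞`. -/
theorem stmt17 (ω : ℝ → ℝ)
    (hc : ContinuousOn ω (Set.Ici 0)) (hmono : MonotoneOn ω (Set.Ici 0))
    (hnn : ∀ t, 0 ≤ t → 0 ≤ ω t) (h0 : ω 0 = 0)
    (htop : Tendsto ω atTop atTop)
    (hom1 : (fun t : ℝ => ω (2 * t)) =O[atTop] ω)
    (x : ℕ → ℝ) (hx1 : x 1 = 0)
    (hxs : ∀ n : ℕ, 1 ≤ n → x n < x (n + 1))
    (hxtop : Tendsto x atTop atTop)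
    (hxgap : ∀ n : ℕ, 2 ≤ n → 2 * x (n - 1) + (n : ℝ) < x n)
    (hgrow : ∀ n : ℕ, 2 ≤ n → ∀ i : ℕ, 1 ≤ i → i ≤ n - 1 →
      (2 : ℝ) ^ (n - i) * ω (x i) ≤ ω (x n))
    (ωt : ℝ → ℝ)
    (hωt : ∀ n : ℕ, 1 ≤ n → ∀ t : ℝ, x n ≤ t → t < x (n + 1) →
      ωt t = (n : ℝ) * ω t - ∑ i ∈ Finset.Icc 1 n, ω (x i)) :
    (fun t : ℝ => ωt (2 * t)) =O[atTop] ωt := by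
  classical
  -- monotonicity of x on indices ≥ 1
  have hxmono : ∀ m n : ℕ, 1 ≤ m → m ≤ n → x m ≤ x n := by
    intro m n hm hmn
    induction hmn with
    | refl => exact le_rfl
    | step h ih => exact ih.trans (hxs _ (hm.trans h)).le
  have hxnn : ∀ n : ℕ, 1 ≤ n → 0 ≤ x n := by
    intro n hn
    rw [← hx1]; exact hxmono 1 n le_rfl hn
  -- sum bound
  have hsum : ∀ n : ℕ, 1 ≤ n → ∑ i ∈ Finset.Icc 1 n, ω (x i) ≤ 2 * ω (x n) := by
    intro n hn
    have h1 : ∀ i ∈ Finset.Icc 1 n, ω (x i) ≤ (1 / 2 : ℝ) ^ (n - i) * ω (x n) := by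
      intro i hi
      simp only [Finset.mem_Icc] at hi
      rcases eq_or_lt_of_le hi.2 with h | h
      · subst h; simp
      · have h2n : 2 ≤ n := by omega
        have hg := hgrow n h2n i hi.1 (by omega)
        have hpos : (0 : ℝ) < 2 ^ (n - i) := by positivity
        rw [one_div, inv_pow, inv_mul_eq_div, le_div_iff₀ hpos]
        linarith
    calc ∑ i ∈ Finset.Icc 1 n, ω (x i)
        ≤ ∑ i ∈ Finset.Icc 1 n, (1 / 2 : ℝ) ^ (n - i) * ω (x n) := Finset.sum_le_sum h1
      _ = (∑ i ∈ Finset.Icc 1 n, (1 / 2 : ℝ) ^ (n - i)) * ω (x n) := by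
          rw [Finset.sum_mul]
      _ ≤ 2 * ω (x n) := by
          apply mul_le_mul_of_nonneg_right _ (hnn _ (hxnn n hn))
          have geo : ∀ m : ℕ, 1 ≤ m →
              ∑ i ∈ Finset.Icc 1 m, (1 / 2 : ℝ) ^ (m - i) ≤ 2 - 2 * (1 / 2 : ℝ) ^ m := by
            intro m hm
            induction m with
            | zero => omega
            | succ k ih =>
              rcases Nat.eq_zero_or_pos k with hk | hk
              · subst hk; norm_num
              · rw [Finset.sum_Icc_succ_top (by omega : 1 ≤ k + 1)]
                have hcongr : ∀ i ∈ Finset.Icc 1 k, (1 / 2 : ℝ) ^ (k + 1 - i) =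
                    (1 / 2 : ℝ) ^ (k - i) * (1 / 2) := by
                  intro i hi
                  simp only [Finset.mem_Icc] at hi
                  rw [← pow_succ]
                  congr 1
                  omega
                rw [Finset.sum_congr rfl hcongr, ← Finset.sum_mul]
                have hih := ih hk
                have hpow : (0 : ℝ) < (1 / 2 : ℝ) ^ k := by positivity
                simp only [Nat.sub_self, pow_zero, pow_succ]
                nlinarith
          have hgeo := geo n hn
          have hpow : (0 : ℝ) < (1 / 2 : ℝ) ^ n := by positivity
          linarith
  have hSnn : ∀ n : ℕ, 0 ≤ ∑ i ∈ Finset.Icc 1 n, ω (x i) := by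
    intro n
    exact Finset.sum_nonneg fun i hi => hnn _ (hxnn i (Finset.mem_Icc.mp hi).1)
  -- extract the constant
  obtain ⟨C, hC, hCb⟩ := hom1.exists_pos
  rw [IsBigOWith] at hCb
  rw [isBigO_iff]
  refine ⟨2 * C, ?_⟩
  filter_upwards [hCb, eventually_ge_atTop (x 5), eventually_ge_atTop (0 : ℝ)]
    with t hCt hx5 ht0
  -- locate t
  obtain ⟨N, hNt, hN1⟩ := ((hxtop.eventually_gt_atTop t).and (eventually_ge_atTop 5)).exists
  set p : ℕ → Prop := fun k => x k ≤ t with hp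
  set n := Nat.findGreatest p N with hndef
  have hp1 : p 1 := by rw [hp]; simpa [hx1] using ht0
  have hn1 : 1 ≤ n := Nat.le_findGreatest (by omega) hp1
  have hxnt : x n ≤ t := Nat.findGreatest_spec (P := p) (by omega) hp1
  have hnN : n ≤ N := Nat.findGreatest_le N
  have hnltN : n < N := by
    rcases lt_or_eq_of_le hnN with h | h
    · exact h
    · exfalso; rw [h] at hxnt; linarith
  have htxn1 : t < x (n + 1) := by
    have := Nat.findGreatest_is_greatest (P := p) (n := N) (k := n + 1) (by omega) (by omega)
    simpa [hp] using not_le.mp this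
  have hn5 : 5 ≤ n := by
    by_contra h
    have : x (n + 1) ≤ x 5 := hxmono (n + 1) 5 (by omega) (by omega)
    linarith
  -- bounds on 2t
  have h2t0 : (0 : ℝ) ≤ 2 * t := by linarith
  have hxn2t : x n ≤ 2 * t := by
    have := hxnn n hn1; linarith
  have h2tlt : 2 * t < x (n + 2) := by
    have hg := hxgap (n + 2) (by omega)
    have : (n + 2 : ℕ) - 1 = n + 1 := by omega
    rw [this] at hg
    have hc2 : (0 : ℝ) ≤ (n + 2 : ℕ) := by positivity
    push_cast at hg
    nlinarith
  -- ω(t) facts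
  have hωtnn : 0 ≤ ω t := hnn t ht0
  have hωxn_le : ω (x n) ≤ ω t := hmono (hxnn n hn1) ht0 hxnt
  -- lower bound for ωt t
  have hlow : ((n : ℝ) - 2) * ω t ≤ ωt t := by
    rw [hωt n hn1 t hxnt htxn1]
    have := hsum n hn1
    nlinarith
  -- ω(2t) ≤ C ω t
  have hω2t : ω (2 * t) ≤ C * ω t := by
    have h1 : ‖ω (2 * t)‖ ≤ C * ‖ω t‖ := hCt
    rw [Real.norm_eq_abs, Real.norm_eq_abs, abs_of_nonneg (hnn _ h2t0),
      abs_of_nonneg hωtnn] at h1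
    exact h1
  -- upper bound for ωt (2t)
  have hup : ωt (2 * t) ≤ ((n : ℝ) + 1) * ω (2 * t) ∧ 0 ≤ ωt (2 * t) := by
    rcases lt_or_ge (2 * t) (x (n + 1)) with h | h
    · rw [hωt n hn1 (2 * t) hxn2t h]
      constructor
      · have := hSnn n
        have : ω (2 * t) ≤ ω (2 * t) := le_rfl
        nlinarith [hSnn n, hnn _ h2t0]
      · have hs := hsum n hn1
        have hωxn2t : ω (x n) ≤ ω (2 * t) := hmono (hxnn n hn1) h2t0 hxn2t
        have hn5' : (5 : ℝ) ≤ (n : ℝ) := by exact_mod_cast hn5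
        nlinarith [hnn _ h2t0]
    · rw [hωt (n + 1) (by omega) (2 * t) h h2tlt]
      push_cast
      constructor
      · nlinarith [hSnn (n + 1), hnn _ h2t0]
      · have hs := hsum (n + 1) (by omega)
        have hωxn2t : ω (x (n + 1)) ≤ ω (2 * t) := hmono (hxnn (n + 1) (by omega)) h2t0 h
        have hn5' : (5 : ℝ) ≤ (n : ℝ) := by exact_mod_cast hn5
        nlinarith [hnn _ h2t0]
  have hωtnn' : 0 ≤ ωt t := by
    have hn5' : (5 : ℝ) ≤ (n : ℝ) := by exact_mod_cast hn5
    nlinarith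
  rw [Real.norm_eq_abs, Real.norm_eq_abs, abs_of_nonneg hup.2, abs_of_nonneg hωtnn']
  have hn5' : (5 : ℝ) ≤ (n : ℝ) := by exact_mod_cast hn5
  calc ωt (2 * t) ≤ ((n : ℝ) + 1) * ω (2 * t) := hup.1
    _ ≤ ((n : ℝ) + 1) * (C * ω t) := by
        apply mul_le_mul_of_nonneg_left hω2t; linarith
    _ ≤ 2 * C * (((n : ℝ) - 2) * ω t) := by
        nlinarith [mul_nonneg (mul_nonneg hC.le hωtnn) (by linarith : (0:ℝ) ≤ (n:ℝ) - 5)]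
    _ ≤ 2 * C * ωt t := by
        apply mul_le_mul_of_nonneg_left hlow; linarith
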